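/- Let x be an allocation and ω the endowment. Construct for each type t the preference P*_t that ranks all objects received by type-t agents (the set H^t) above all other objects, orders H^t by a linear extension ≻⁺ of the reversed AG-edge relation, and orders H \ H^t by a linear extension of the relation P_t (where h P_t h' iff some type-t agent has x = h and ω = h'). Then x is individually rational under the profile (P*_t): every agent i satisfies x(i) = ω(i) or x(i) P*_{τ(i)} ω(i). -/
import Mathlib


/-- the constructed profile `P*` (objects received by type-`t`
agents ranked on top via a linear extension `≻⁺` of the reversed AG-edge
relation, remaining objects ranked by a linear extension of the revealed
relation `P_t`) makes the allocation `x` individually rational. -/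
theorem stmt_18 {I H T : Type*} [Fintype I] [Fintype H]
    (τ : I → T) (x ω : I → H)
    (succ : H → H → Prop)
    (hsucc_asymm : ∀ a b : H, succ a b → ¬ succ b a)
    (hsucc_trans : ∀ a b c : H, succ a b → succ b c → succ a c)
    (hsucc_total : ∀ a b : H, a ≠ b → succ a b ∨ succ b a)
    -- `≻⁺` extends the reversed AG-edge relation
    (hsucc_ext : ∀ h h' : H,
      (∃ i j : I, τ i = τ j ∧ ω j = h ∧ x j = h' ∧ h' ≠ h ∧ x i = h) →
      succ h' h)
    (Pplus : T → H → H → Prop)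
    (hP_asymm : ∀ t : T, ∀ a b : H, Pplus t a b → ¬ Pplus t b a)
    (hP_trans : ∀ t : T, ∀ a b c : H, Pplus t a b → Pplus t b c → Pplus t a c)
    (hP_total : ∀ t : T, ∀ a b : H, a ≠ b → Pplus t a b ∨ Pplus t b a)
    -- `P⁺_t` extends the revealed relation `P_t`
    (hP_ext : ∀ t : T, ∀ h h' : H,
      (∃ i : I, τ i = t ∧ x i = h ∧ ω i = h') → Pplus t h h') :
    let Hset : T → Set H := fun t => {h | ∃ i : I, τ i = t ∧ x i = h}
    let Pstar : T → H → H → Prop := fun t h h' =>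
      (h ∈ Hset t ∧ h' ∈ Hset t ∧ succ h h') ∨
      (h ∈ Hset t ∧ h' ∉ Hset t) ∨
      (h ∉ Hset t ∧ h' ∉ Hset t ∧ Pplus t h h')
    ∀ i : I, x i = ω i ∨ Pstar (τ i) (x i) (ω i) := by
  intro Hset Pstar i
  by_cases hxw : x i = ω i
  · exact Or.inl hxw
  · right
    have hx : x i ∈ Hset (τ i) := ⟨i, rfl, rfl⟩
    by_cases hw : ω i ∈ Hset (τ i)
    · obtain ⟨j, hj1, hj2⟩ := hw
      left
      refine ⟨hx, ⟨j, hj1, hj2⟩, ?_⟩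
      exact hsucc_ext (ω i) (x i) ⟨j, i, hj1, rfl, rfl, hxw, hj2⟩
    · exact Or.inr (Or.inl ⟨hx, hw⟩)
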